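/- Let ζ : ℝ → ℝ be differentiable and let (τ, σ) ∈ ℝ² with ζ(σ) ≠ 0. Define t̂(τ, σ) = sinh(ζ(σ)τ)/ζ(σ) and ẑ(τ, σ) = (cosh(ζ(σ)τ) - 1)/ζ(σ) + σ. Then the Jacobian determinant Δ = (∂t̂/∂τ)(∂ẑ/∂σ) - (∂ẑ/∂τ)(∂t̂/∂σ) of the map (τ, σ) ↦ (t̂, ẑ) equals -ζ'(σ)/ζ(σ)² + cosh(ζ(σ)τ)·(1 + ζ'(σ)/ζ(σ)²). -/

import Mathlib

/-- The Jacobian determinant of the co-moving coordinate transformation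
`(τ,σ) ↦ (t̂,ẑ) = (sinh(ζ(σ)τ)/ζ(σ), (cosh(ζ(σ)τ) - 1)/ζ(σ) + σ)` equals
`-ζ'(σ)/ζ(σ)² + cosh(ζ(σ)τ)(1 + ζ'(σ)/ζ(σ)²)`. -/
theorem wall_of_charge_jacobian_determinant
    (ζ : ℝ → ℝ) (hζ : Differentiable ℝ ζ) (τ σ : ℝ) (hζσ : ζ σ ≠ 0) :
    deriv (fun τ' => Real.sinh (ζ σ * τ') / ζ σ) τ *
        deriv (fun σ' => (Real.cosh (ζ σ' * τ) - 1) / ζ σ' + σ') σ -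
      deriv (fun τ' => (Real.cosh (ζ σ * τ') - 1) / ζ σ + σ) τ *
        deriv (fun σ' => Real.sinh (ζ σ' * τ) / ζ σ') σ
      = -(deriv ζ σ) / (ζ σ) ^ 2 +
        Real.cosh (ζ σ * τ) * (1 + deriv ζ σ / (ζ σ) ^ 2) := by
  have hzd := (hζ σ).hasDerivAt
  have h1 : HasDerivAt (fun τ' => Real.sinh (ζ σ * τ') / ζ σ)
      (Real.cosh (ζ σ * τ) * (ζ σ * 1) / ζ σ) τ :=
    (((Real.hasDerivAt_sinh (ζ σ * τ)).comp τ
      ((hasDerivAt_id τ).const_mul (ζ σ)))).div_const _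
  have h2 : HasDerivAt (fun τ' => (Real.cosh (ζ σ * τ') - 1) / ζ σ + σ)
      (Real.sinh (ζ σ * τ) * (ζ σ * 1) / ζ σ) τ :=
    (((((Real.hasDerivAt_cosh (ζ σ * τ)).comp τ
      ((hasDerivAt_id τ).const_mul (ζ σ)))).sub_const 1).div_const _).add_const σ
  have hnum : HasDerivAt (fun σ' => Real.sinh (ζ σ' * τ))
      (Real.cosh (ζ σ * τ) * (deriv ζ σ * τ)) σ :=
    by have := (Real.hasDerivAt_sinh (ζ σ * τ)).comp σ (hzd.mul_const τ); exact this
  have hnum2 : HasDerivAt (fun σ' => Real.cosh (ζ σ' * τ) - 1)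
      (Real.sinh (ζ σ * τ) * (deriv ζ σ * τ)) σ :=
    by have := ((Real.hasDerivAt_cosh (ζ σ * τ)).comp σ (hzd.mul_const τ)).sub_const 1; exact this
  have h3 : HasDerivAt (fun σ' => Real.sinh (ζ σ' * τ) / ζ σ')
      ((Real.cosh (ζ σ * τ) * (deriv ζ σ * τ) * ζ σ -
        Real.sinh (ζ σ * τ) * deriv ζ σ) / ζ σ ^ 2) σ :=
    hnum.div hzd hζσ
  have h4 : HasDerivAt (fun σ' => (Real.cosh (ζ σ' * τ) - 1) / ζ σ' + σ')
      ((Real.sinh (ζ σ * τ) * (deriv ζ σ * τ) * ζ σ -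
        (Real.cosh (ζ σ * τ) - 1) * deriv ζ σ) / ζ σ ^ 2 + 1) σ :=
    (hnum2.div hzd hζσ).add (hasDerivAt_id σ)
  rw [h1.deriv, h2.deriv, h3.deriv, h4.deriv]
  have hid : Real.cosh (ζ σ * τ) ^ 2 - Real.sinh (ζ σ * τ) ^ 2 = 1 :=
    Real.cosh_sq_sub_sinh_sq _
  field_simp
  linear_combination (-(deriv ζ σ)) * hid
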